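/- Let E and F be real Banach spaces, Λ₁ > 0, γ ≥ 0 with 2 γ Λ₁² < 1, and Π₁, Π₂, Π₃ ≥ 0. Let f : ℝ × E × F → ℝ satisfy |f(τ₁, x, y) − f(τ₂, x, y)| ≥ Λ₁^{−1} |τ₁ − τ₂|, |f(τ, x₁, y) − f(τ, x₂, y)| ≤ Λ₁ ‖x₁ − x₂‖, |f(τ, x, y₁) − f(τ, x, y₂)| ≤ Λ₁ ‖y₁ − y₂‖ for all arguments, and let g^s : ℝ × E × F → F satisfy ‖g^s(τ₁, x, y) − g^s(τ₂, x, y)‖ ≤ Π₁ |τ₁ − τ₂|, ‖g^s(τ, x₁, y) − g^s(τ, x₂, y)‖ ≤ Π₂ ‖x₁ − x₂‖, ‖g^s(τ, x, y₁) − g^s(τ, x, y₂)‖ ≤ Π₃ ‖y₁ − y₂‖. For ℓ = 1, 2 let x^{(u,ℓ)} : ℝ → E and x^{(s,ℓ)} : ℝ → F be γ-Lipschitz, and suppose τ₁⁻, τ₂⁻, τ ∈ ℝ satisfy f(τ_ℓ⁻, x^{(u,ℓ)}(τ_ℓ⁻), x^{(s,ℓ)}(τ_ℓ⁻)) = τ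 for ℓ = 1, 2. Set K = Λ₁² (Π₁ + Π₂ γ + Π₃ γ)/(1 − 2 γ Λ₁²). Then ‖g^s(τ₁⁻, x^{(u,1)}(τ₁⁻), x^{(s,1)}(τ₁⁻)) − g^s(τ₂⁻, x^{(u,2)}(τ₂⁻), x^{(s,2)}(τ₂⁻))‖ ≤ (Π₂ + K) ‖x^{(u,1)}(τ₁⁻) − x^{(u,2)}(τ₁⁻)‖ + (Π₃ + K) ‖x^{(s,1)}(τ₁⁻) − x^{(s,2)}(τ₁⁻)‖. -/

import Mathlib

/-- Combination of estimates (ctr1) and (ctr2) in the contraction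
proof: the difference of the stable components of the graph transforms of two
sections at the same parameter τ is controlled by the C⁰ distance of the original
sections, with constant K = Λ₁²(P₁ + P₂γ + P₃γ)/(1 − 2γΛ₁²). -/
theorem graph_transform_stable_contraction_estimate
    {E F : Type*} [NormedAddCommGroup E] [NormedSpace ℝ E] [CompleteSpace E]
    [NormedAddCommGroup F] [NormedSpace ℝ F] [CompleteSpace F]
    (f : ℝ → E → F → ℝ) (gs : ℝ → E → F → F) (Λ₁ γ P₁ P₂ P₃ : ℝ)
    (hΛ₁ : 0 < Λ₁) (hγ : 0 ≤ γ) (hsmall : 2 * γ * Λ₁ ^ 2 < 1)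
    (hP₁ : 0 ≤ P₁) (hP₂ : 0 ≤ P₂) (hP₃ : 0 ≤ P₃)
    (hf1 : ∀ τ₁ τ₂ x y, Λ₁⁻¹ * |τ₁ - τ₂| ≤ |f τ₁ x y - f τ₂ x y|)
    (hf2 : ∀ τ x₁ x₂ y, |f τ x₁ y - f τ x₂ y| ≤ Λ₁ * ‖x₁ - x₂‖)
    (hf3 : ∀ τ x y₁ y₂, |f τ x y₁ - f τ x y₂| ≤ Λ₁ * ‖y₁ - y₂‖)
    (hg1 : ∀ τ₁ τ₂ x y, ‖gs τ₁ x y - gs τ₂ x y‖ ≤ P₁ * |τ₁ - τ₂|)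
    (hg2 : ∀ τ x₁ x₂ y, ‖gs τ x₁ y - gs τ x₂ y‖ ≤ P₂ * ‖x₁ - x₂‖)
    (hg3 : ∀ τ x y₁ y₂, ‖gs τ x y₁ - gs τ x y₂‖ ≤ P₃ * ‖y₁ - y₂‖)
    (xu₁ xu₂ : ℝ → E) (xs₁ xs₂ : ℝ → F)
    (hxu₁ : ∀ τ₁ τ₂, ‖xu₁ τ₁ - xu₁ τ₂‖ ≤ γ * |τ₁ - τ₂|)
    (hxu₂ : ∀ τ₁ τ₂, ‖xu₂ τ₁ - xu₂ τ₂‖ ≤ γ * |τ₁ - τ₂|)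
    (hxs₁ : ∀ τ₁ τ₂, ‖xs₁ τ₁ - xs₁ τ₂‖ ≤ γ * |τ₁ - τ₂|)
    (hxs₂ : ∀ τ₁ τ₂, ‖xs₂ τ₁ - xs₂ τ₂‖ ≤ γ * |τ₁ - τ₂|)
    (τ₁m τ₂m τ : ℝ)
    (h₁ : f τ₁m (xu₁ τ₁m) (xs₁ τ₁m) = τ)
    (h₂ : f τ₂m (xu₂ τ₂m) (xs₂ τ₂m) = τ) :
    ‖gs τ₁m (xu₁ τ₁m) (xs₁ τ₁m) - gs τ₂m (xu₂ τ₂m) (xs₂ τ₂m)‖ ≤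
      (P₂ + Λ₁ ^ 2 * (P₁ + P₂ * γ + P₃ * γ) / (1 - 2 * γ * Λ₁ ^ 2)) *
        ‖xu₁ τ₁m - xu₂ τ₁m‖ +
      (P₃ + Λ₁ ^ 2 * (P₁ + P₂ * γ + P₃ * γ) / (1 - 2 * γ * Λ₁ ^ 2)) *
        ‖xs₁ τ₁m - xs₂ τ₁m‖ := by
  set a := ‖xu₁ τ₁m - xu₂ τ₁m‖ with ha
  set b := ‖xs₁ τ₁m - xs₂ τ₁m‖ with hb
  have ha0 : 0 ≤ a := norm_nonneg _
  have hb0 : 0 ≤ b := norm_nonneg _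
  have hD : 0 < 1 - 2 * γ * Λ₁ ^ 2 := by linarith
  set d := |τ₁m - τ₂m| with hd
  have hd0 : 0 ≤ d := abs_nonneg _
  -- key estimate on d
  have key : d ≤ Λ₁ ^ 2 * (a + b) / (1 - 2 * γ * Λ₁ ^ 2) := by
    have h0 : Λ₁⁻¹ * d ≤ |f τ₁m (xu₂ τ₂m) (xs₂ τ₂m) - f τ₂m (xu₂ τ₂m) (xs₂ τ₂m)| :=
      hf1 τ₁m τ₂m _ _
    have heq : f τ₁m (xu₂ τ₂m) (xs₂ τ₂m) - f τ₂m (xu₂ τ₂m) (xs₂ τ₂m)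
        = (f τ₁m (xu₂ τ₂m) (xs₂ τ₂m) - f τ₁m (xu₁ τ₁m) (xs₂ τ₂m))
          + (f τ₁m (xu₁ τ₁m) (xs₂ τ₂m) - f τ₁m (xu₁ τ₁m) (xs₁ τ₁m)) := by
      rw [h₂, h₁]; ring
    have h1 : |f τ₁m (xu₂ τ₂m) (xs₂ τ₂m) - f τ₂m (xu₂ τ₂m) (xs₂ τ₂m)|
        ≤ Λ₁ * ‖xu₂ τ₂m - xu₁ τ₁m‖ + Λ₁ * ‖xs₂ τ₂m - xs₁ τ₁m‖ := by
      rw [heq]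
      calc _ ≤ |f τ₁m (xu₂ τ₂m) (xs₂ τ₂m) - f τ₁m (xu₁ τ₁m) (xs₂ τ₂m)|
              + |f τ₁m (xu₁ τ₁m) (xs₂ τ₂m) - f τ₁m (xu₁ τ₁m) (xs₁ τ₁m)| := abs_add_le _ _
        _ ≤ _ := add_le_add (hf2 _ _ _ _) (hf3 _ _ _ _)
    have hu : ‖xu₂ τ₂m - xu₁ τ₁m‖ ≤ γ * d + a := by
      have t := hxu₂ τ₂m τ₁m
      rw [abs_sub_comm] at t
      calc ‖xu₂ τ₂m - xu₁ τ₁m‖ ≤ ‖xu₂ τ₂m - xu₂ τ₁m‖ + ‖xu₂ τ₁m - xu₁ τ₁m‖ :=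
            norm_sub_le_norm_sub_add_norm_sub _ _ _
        _ ≤ γ * d + a := add_le_add t (le_of_eq (norm_sub_rev _ _))
    have hs : ‖xs₂ τ₂m - xs₁ τ₁m‖ ≤ γ * d + b := by
      have t := hxs₂ τ₂m τ₁m
      rw [abs_sub_comm] at t
      calc ‖xs₂ τ₂m - xs₁ τ₁m‖ ≤ ‖xs₂ τ₂m - xs₂ τ₁m‖ + ‖xs₂ τ₁m - xs₁ τ₁m‖ :=
            norm_sub_le_norm_sub_add_norm_sub _ _ _
        _ ≤ γ * d + b := add_le_add t (le_of_eq (norm_sub_rev _ _))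
    have h2 : Λ₁⁻¹ * d ≤ Λ₁ * (γ * d + a) + Λ₁ * (γ * d + b) := by
      refine h0.trans (h1.trans ?_)
      exact add_le_add (mul_le_mul_of_nonneg_left hu hΛ₁.le)
        (mul_le_mul_of_nonneg_left hs hΛ₁.le)
    have h3 : d ≤ Λ₁ ^ 2 * (a + b) + 2 * γ * Λ₁ ^ 2 * d := by
      have h4 := mul_le_mul_of_nonneg_left h2 hΛ₁.le
      rw [← mul_assoc, mul_inv_cancel₀ hΛ₁.ne', one_mul] at h4
      nlinarith [h4]
    rw [le_div_iff₀ hD]; nlinarith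
  set K := Λ₁ ^ 2 * (P₁ + P₂ * γ + P₃ * γ) / (1 - 2 * γ * Λ₁ ^ 2) with hK
  have main : ‖gs τ₁m (xu₁ τ₁m) (xs₁ τ₁m) - gs τ₂m (xu₂ τ₂m) (xs₂ τ₂m)‖
      ≤ P₂ * a + P₃ * b + (P₁ + P₂ * γ + P₃ * γ) * d := by
    have t1 := hg2 τ₁m (xu₁ τ₁m) (xu₂ τ₁m) (xs₁ τ₁m)
    have t2 := hg3 τ₁m (xu₂ τ₁m) (xs₁ τ₁m) (xs₂ τ₁m)
    have t3 := hg1 τ₁m τ₂m (xu₂ τ₁m) (xs₂ τ₁m)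
    have t4 : ‖gs τ₂m (xu₂ τ₁m) (xs₂ τ₁m) - gs τ₂m (xu₂ τ₂m) (xs₂ τ₁m)‖ ≤ P₂ * (γ * d) := by
      refine (hg2 _ _ _ _).trans (mul_le_mul_of_nonneg_left ?_ hP₂)
      exact hxu₂ τ₁m τ₂m
    have t5 : ‖gs τ₂m (xu₂ τ₂m) (xs₂ τ₁m) - gs τ₂m (xu₂ τ₂m) (xs₂ τ₂m)‖ ≤ P₃ * (γ * d) := by
      refine (hg3 _ _ _ _).trans (mul_le_mul_of_nonneg_left ?_ hP₃)
      exact hxs₂ τ₁m τ₂m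
    have u1 := norm_sub_le_norm_sub_add_norm_sub (gs τ₁m (xu₁ τ₁m) (xs₁ τ₁m))
      (gs τ₁m (xu₂ τ₁m) (xs₁ τ₁m)) (gs τ₂m (xu₂ τ₂m) (xs₂ τ₂m))
    have u2 := norm_sub_le_norm_sub_add_norm_sub (gs τ₁m (xu₂ τ₁m) (xs₁ τ₁m))
      (gs τ₁m (xu₂ τ₁m) (xs₂ τ₁m)) (gs τ₂m (xu₂ τ₂m) (xs₂ τ₂m))
    have u3 := norm_sub_le_norm_sub_add_norm_sub (gs τ₁m (xu₂ τ₁m) (xs₂ τ₁m))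
      (gs τ₂m (xu₂ τ₁m) (xs₂ τ₁m)) (gs τ₂m (xu₂ τ₂m) (xs₂ τ₂m))
    have u4 := norm_sub_le_norm_sub_add_norm_sub (gs τ₂m (xu₂ τ₁m) (xs₂ τ₁m))
      (gs τ₂m (xu₂ τ₂m) (xs₂ τ₁m)) (gs τ₂m (xu₂ τ₂m) (xs₂ τ₂m))
    simp only [← ha, ← hb, ← hd] at t1 t2 t3 t4 t5
    linarith
  have hK0 : 0 ≤ K := by
    apply div_nonneg _ hD.le
    positivity
  have hKd : (P₁ + P₂ * γ + P₃ * γ) * d ≤ K * (a + b) := by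
    have hc : 0 ≤ P₁ + P₂ * γ + P₃ * γ := by positivity
    calc (P₁ + P₂ * γ + P₃ * γ) * d
        ≤ (P₁ + P₂ * γ + P₃ * γ) * (Λ₁ ^ 2 * (a + b) / (1 - 2 * γ * Λ₁ ^ 2)) :=
          mul_le_mul_of_nonneg_left key hc
      _ = K * (a + b) := by rw [hK]; field_simp
  calc ‖gs τ₁m (xu₁ τ₁m) (xs₁ τ₁m) - gs τ₂m (xu₂ τ₂m) (xs₂ τ₂m)‖
      ≤ P₂ * a + P₃ * b + (P₁ + P₂ * γ + P₃ * γ) * d := main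
    _ ≤ P₂ * a + P₃ * b + K * (a + b) := by linarith
    _ = (P₂ + K) * a + (P₃ + K) * b := by ring
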